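/- Let x_1, ..., x_m be nonzero vectors in R^d, at least two of which are not collinear. Define D as the dm x dm block-diagonal matrix with diagonal blocks P(x_1), ..., P(x_m), F as the dm x d block column matrix with blocks P(x_1), ..., P(x_m), and E = sum_i P(x_i). Then the Schur complement H = D - F E^{-1} F^T is symmetric positive semi-definite, has rank dm - m - d, and every nonzero eigenvalue of H equals 1. -/

import Mathlib

open Matrix

/-- The orthogonal projection matrix `P(x) = I - x xᵀ / ‖x‖²`. -/
noncomputable def proj {d : ℕ} (x : Fin d → ℝ) : Matrix (Fin d) (Fin d) ℝ :=
  1 - (x ⬝ᵥ x)⁻¹ • Matrix.vecMulVec x x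

lemma proj_symm_apply {d : ℕ} (x : Fin d → ℝ) (a b : Fin d) :
    proj x a b = proj x b a := by
  simp only [proj, Matrix.sub_apply, Matrix.smul_apply, vecMulVec_apply, one_apply, smul_eq_mul]
  rw [mul_comm (x b)]
  congr 1
  simp [eq_comm]

lemma vecMulVec_sq {d : ℕ} (x : Fin d → ℝ) :
    vecMulVec x x * vecMulVec x x = (x ⬝ᵥ x) • vecMulVec x x := by
  ext i j
  simp only [mul_apply, vecMulVec_apply, Matrix.smul_apply, smul_eq_mul, dotProduct]
  rw [Finset.sum_mul]
  exact Finset.sum_congr rfl fun k _ => by ring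

lemma proj_idem {d : ℕ} {x : Fin d → ℝ} (hx : x ≠ 0) : proj x * proj x = proj x := by
  have hs : x ⬝ᵥ x ≠ 0 := fun h => hx (dotProduct_self_eq_zero.mp h)
  unfold proj
  rw [sub_mul, mul_sub, mul_sub, one_mul, mul_one]
  simp only [mul_smul_comm, smul_mul_assoc, one_mul, vecMulVec_sq, smul_smul]
  rw [show (x ⬝ᵥ x)⁻¹ * ((x ⬝ᵥ x)⁻¹ * (x ⬝ᵥ x)) = (x ⬝ᵥ x)⁻¹ by field_simp]
  abel

lemma proj_mulVec {d : ℕ} (x v : Fin d → ℝ) :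
    proj x *ᵥ v = v - ((x ⬝ᵥ x)⁻¹ * (x ⬝ᵥ v)) • x := by
  have h1 : vecMulVec x x *ᵥ v = (x ⬝ᵥ v) • x := by
    ext a
    simp only [mulVec, dotProduct, vecMulVec_apply, Pi.smul_apply, smul_eq_mul]
    rw [Finset.sum_mul]
    exact Finset.sum_congr rfl fun k _ => by ring
  unfold proj
  rw [sub_mulVec, one_mulVec, smul_mulVec, h1, smul_smul]

lemma posSemidef_of_idem {n : Type*} [Fintype n] (A : Matrix n n ℝ)
    (hsymm : Aᵀ = A) (hidem : A * A = A) : A.PosSemidef := by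
  rw [posSemidef_iff_dotProduct_mulVec]
  constructor
  · show Aᴴ = A
    ext i j
    simpa [conjTranspose_apply] using congrFun (congrFun hsymm i) j
  · intro v
    have hv : star v = v := by simp
    rw [hv, ← hidem, ← mulVec_mulVec, dotProduct_mulVec]
    have h2 : v ᵥ* A = A *ᵥ v := by rw [← mulVec_transpose, hsymm]
    rw [h2]
    exact Finset.sum_nonneg fun i _ => mul_self_nonneg _

lemma rank_eq_trace_of_idem {n : Type*} [Fintype n] [DecidableEq n] (A : Matrix n n ℝ)
    (h : A * A = A) : (A.rank : ℝ) = A.trace := by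
  set f := A.mulVecLin with hf'
  have hf : f ∘ₗ f = f := by rw [hf', ← Matrix.mulVecLin_mul, h]
  have hp : LinearMap.IsProj (LinearMap.range f) f := by
    constructor
    · intro y; exact LinearMap.mem_range_self f y
    · rintro y ⟨w, rfl⟩
      exact DFunLike.congr_fun hf w
  have ht := hp.trace
  rw [LinearMap.trace_eq_matrix_trace ℝ (Pi.basisFun ℝ n) f,
    LinearMap.toMatrix_eq_toMatrix'] at ht
  have hA : LinearMap.toMatrix' f = A := by
    rw [hf']
    exact LinearMap.toMatrix'_toLin' A
  rw [hA] at ht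
  rw [Matrix.rank, ht]

theorem stmt4 {d m : ℕ} (x : Fin m → Fin d → ℝ) (hx : ∀ i, x i ≠ 0)
    (hnc : ¬ ∃ v : Fin d → ℝ, ∀ i, ∃ c : ℝ, x i = c • v)
    (D : Matrix (Fin m × Fin d) (Fin m × Fin d) ℝ)
    (hD : D = fun q r => if q.1 = r.1 then proj (x q.1) q.2 r.2 else 0)
    (F : Matrix (Fin m × Fin d) (Fin d) ℝ)
    (hF : F = fun q b => proj (x q.1) q.2 b)
    (H : Matrix (Fin m × Fin d) (Fin m × Fin d) ℝ)
    (hH : H = D - F * (∑ i, proj (x i))⁻¹ * Fᵀ) :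
    H.PosSemidef ∧ H.rank = d * m - m - d ∧
      ∀ (μ : ℝ) (z : Fin m × Fin d → ℝ), z ≠ 0 → H *ᵥ z = μ • z →
        μ = 0 ∨ μ = 1 := by
  have hs : ∀ i, x i ⬝ᵥ x i ≠ 0 := fun i h => hx i (dotProduct_self_eq_zero.mp h)
  set E := ∑ i, proj (x i) with hE
  -- symmetry of D
  have hDsym : Dᵀ = D := by
    subst hD
    ext ⟨i, a⟩ ⟨k, b⟩
    erw [transpose_apply]
    by_cases h : i = k
    · subst h; simp [proj_symm_apply]
    · simp [h, Ne.symm h]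
  -- D * F = F
  have hDF : D * F = F := by
    subst hD hF
    ext ⟨i, a⟩ b
    erw [mul_apply]
    rw [Fintype.sum_prod_type]
    simp only [ite_mul, zero_mul]
    rw [Finset.sum_eq_single i
      (fun j _ hj => Finset.sum_eq_zero fun c _ => if_neg (Ne.symm hj))
      (fun h => absurd (Finset.mem_univ i) h)]
    simp only [eq_self_iff_true, if_true]
    calc ∑ c, proj (x i) a c * proj (x i) c b = (proj (x i) * proj (x i)) a b := by
          rw [mul_apply]
      _ = proj (x i) a b := by rw [proj_idem (hx i)]
  -- D * D = D
  have hDD : D * D = D := by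
    subst hD
    ext ⟨i, a⟩ ⟨k, b⟩
    erw [mul_apply]
    rw [Fintype.sum_prod_type]
    simp only [ite_mul, zero_mul]
    rw [Finset.sum_eq_single i
      (fun j _ hj => Finset.sum_eq_zero fun c _ => if_neg (Ne.symm hj))
      (fun h => absurd (Finset.mem_univ i) h)]
    simp only [eq_self_iff_true, if_true]
    by_cases h : i = k
    · subst h
      simp only [if_true]
      calc ∑ c, proj (x i) a c * proj (x i) c b = (proj (x i) * proj (x i)) a b := by
            rw [mul_apply]
        _ = proj (x i) a b := by rw [proj_idem (hx i)]
    · simp [h]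
  -- Fᵀ * F = E
  have hFtF : Fᵀ * F = E := by
    subst hF
    ext a b
    erw [mul_apply]
    rw [Fintype.sum_prod_type, hE, Matrix.sum_apply]
    refine Finset.sum_congr rfl fun i _ => ?_
    simp only [transpose_apply]
    calc ∑ c, proj (x i) c a * proj (x i) c b
        = ∑ c, proj (x i) a c * proj (x i) c b := by
          exact Finset.sum_congr rfl fun c _ => by rw [proj_symm_apply (x i) c a]
      _ = (proj (x i) * proj (x i)) a b := by rw [mul_apply]
      _ = proj (x i) a b := by rw [proj_idem (hx i)]
  -- E is symmetric
  have hEsym : Eᵀ = E := by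
    rw [hE]
    ext a b
    simp only [transpose_apply, Matrix.sum_apply]
    exact Finset.sum_congr rfl fun i _ => proj_symm_apply (x i) b a
  -- E is positive definite
  have hEpd : E.PosDef := by
    rw [posDef_iff_dotProduct_mulVec]
    constructor
    · show Eᴴ = E
      ext a b
      simpa [conjTranspose_apply] using congrFun (congrFun hEsym a) b
    · intro v hv
      have hstar : star v = v := by simp
      rw [hstar]
      have hmv : E *ᵥ v = ∑ i, proj (x i) *ᵥ v := by
        ext a
        simp only [hE, mulVec, dotProduct, Matrix.sum_apply, Finset.sum_apply,
          Finset.sum_mul]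
        rw [Finset.sum_comm]
      have hterm : ∀ i, v ⬝ᵥ (proj (x i) *ᵥ v)
          = (proj (x i) *ᵥ v) ⬝ᵥ (proj (x i) *ᵥ v) := by
        intro i
        conv_lhs => rw [← proj_idem (hx i), ← mulVec_mulVec, dotProduct_mulVec,
          ← mulVec_transpose]
        rw [show (proj (x i))ᵀ = proj (x i) by
          ext a b; exact proj_symm_apply (x i) b a]
      have hsum : v ⬝ᵥ (E *ᵥ v) = ∑ i, (proj (x i) *ᵥ v) ⬝ᵥ (proj (x i) *ᵥ v) := by
        rw [hmv]
        rw [show v ⬝ᵥ (∑ i, proj (x i) *ᵥ v) = ∑ i, v ⬝ᵥ (proj (x i) *ᵥ v) by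
          simp only [dotProduct, Finset.sum_apply, Finset.mul_sum]
          rw [Finset.sum_comm]]
        exact Finset.sum_congr rfl fun i _ => hterm i
      rw [hsum]
      have hnn : ∀ i ∈ Finset.univ, (0:ℝ) ≤ (proj (x i) *ᵥ v) ⬝ᵥ (proj (x i) *ᵥ v) :=
        fun i _ => Finset.sum_nonneg fun a _ => mul_self_nonneg _
      rcases (Finset.sum_nonneg hnn).lt_or_eq with hlt | heq
      · exact hlt
      · exfalso
        apply hnc
        refine ⟨v, fun i => ?_⟩
        have hz : (proj (x i) *ᵥ v) ⬝ᵥ (proj (x i) *ᵥ v) = 0 :=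
          (Finset.sum_eq_zero_iff_of_nonneg hnn).mp heq.symm i (Finset.mem_univ i)
        have hPv : proj (x i) *ᵥ v = 0 := dotProduct_self_eq_zero.mp hz
        rw [proj_mulVec] at hPv
        have hveq : v = ((x i ⬝ᵥ x i)⁻¹ * (x i ⬝ᵥ v)) • x i := sub_eq_zero.mp hPv
        set t := (x i ⬝ᵥ x i)⁻¹ * (x i ⬝ᵥ v) with ht
        have htne : t ≠ 0 := by
          intro h0
          apply hv
          rw [hveq, h0, zero_smul]
        exact ⟨t⁻¹, by rw [hveq, smul_smul, inv_mul_cancel₀ htne, one_smul]⟩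
  have hdet : IsUnit E.det := hEpd.det_pos.ne'.isUnit
  have hEinv : E⁻¹ * E = 1 := nonsing_inv_mul E hdet
  have hEinv' : E * E⁻¹ = 1 := mul_nonsing_inv E hdet
  have hEinvsym : (E⁻¹)ᵀ = E⁻¹ := by rw [transpose_nonsing_inv, hEsym]
  set M := F * E⁻¹ * Fᵀ with hM
  have hHM : H = D - M := hH
  have hMsym : Mᵀ = M := by
    rw [hM, transpose_mul, transpose_mul, transpose_transpose, hEinvsym, Matrix.mul_assoc]
  have hFtD : Fᵀ * D = Fᵀ := by rw [← hDsym, ← transpose_mul, hDF]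
  have hDM : D * M = M := by rw [hM, ← Matrix.mul_assoc, ← Matrix.mul_assoc, hDF]
  have hMD : M * D = M := by rw [hM, Matrix.mul_assoc (F * E⁻¹), hFtD]
  have hFtM : Fᵀ * M = Fᵀ := by
    rw [hM, ← Matrix.mul_assoc, ← Matrix.mul_assoc, hFtF, hEinv', Matrix.one_mul]
  have hMM : M * M = M := by
    conv_lhs => rw [hM, Matrix.mul_assoc (F * E⁻¹) Fᵀ M, hFtM]
  have hHsym : Hᵀ = H := by rw [hHM, transpose_sub, hDsym, hMsym]
  have hHH : H * H = H := by
    rw [hHM, sub_mul, mul_sub, mul_sub, hDD, hDM, hMD, hMM]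
    abel
  refine ⟨posSemidef_of_idem H hHsym hHH, ?_, ?_⟩
  · -- rank
    have htrP : ∀ i, (proj (x i)).trace = (d:ℝ) - 1 := by
      intro i
      unfold proj
      rw [trace_sub, trace_smul, trace_one]
      have : (vecMulVec (x i) (x i)).trace = x i ⬝ᵥ x i := by
        simp [Matrix.trace, Matrix.diag, vecMulVec_apply, dotProduct]
      rw [this]
      simp only [smul_eq_mul, inv_mul_cancel₀ (hs i)]
      simp
    have htrD : D.trace = (m:ℝ) * ((d:ℝ) - 1) := by
      subst hD
      unfold Matrix.trace
      erw [show ∑ q : Fin m × Fin d, Matrix.diag _ q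
          = ∑ i : Fin m, ∑ a : Fin d, proj (x i) a a by
        rw [Fintype.sum_prod_type]
        exact Finset.sum_congr rfl fun i _ => Finset.sum_congr rfl fun a _ => by
          simp [Matrix.diag]]
      calc ∑ i : Fin m, ∑ a : Fin d, proj (x i) a a
          = ∑ i : Fin m, (proj (x i)).trace := rfl
        _ = ∑ _i : Fin m, ((d:ℝ) - 1) := Finset.sum_congr rfl fun i _ => htrP i
        _ = (m:ℝ) * ((d:ℝ) - 1) := by
            rw [Finset.sum_const, Finset.card_univ, Fintype.card_fin, nsmul_eq_mul]
    have htrM : M.trace = (d:ℝ) := by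
      rw [hM, trace_mul_comm (F * E⁻¹) Fᵀ, ← Matrix.mul_assoc, hFtF, hEinv', trace_one]
      simp
    have htrH : H.trace = (m:ℝ) * ((d:ℝ) - 1) - d := by
      rw [hHM, trace_sub, htrD, htrM]
    have hr : (H.rank : ℝ) = (m:ℝ) * ((d:ℝ) - 1) - d := by
      rw [rank_eq_trace_of_idem H hHH, htrH]
    have hcast : ((H.rank + m + d : ℕ) : ℝ) = ((d * m : ℕ) : ℝ) := by
      push_cast
      linarith
    have hnat : H.rank + m + d = d * m := Nat.cast_injective hcast
    omega
  · -- eigenvalues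
    intro μ z hz hmain
    have h2 : H *ᵥ (H *ᵥ z) = H *ᵥ z := by rw [mulVec_mulVec, hHH]
    rw [hmain, mulVec_smul, hmain] at h2
    obtain ⟨j, hj⟩ := Function.ne_iff.mp hz
    have hj' : z j ≠ 0 := by simpa using hj
    have h3 := congrFun h2 j
    simp only [Pi.smul_apply, smul_eq_mul] at h3
    have h4 : μ * (μ - 1) * z j = 0 := by ring_nf; linarith [h3]
    rcases mul_eq_zero.mp h4 with h5 | h5
    · rcases mul_eq_zero.mp h5 with h6 | h6
      · exact Or.inl h6
      · exact Or.inr (by linarith)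
    · exact absurd h5 hj'
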